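/- Let φ be a d-dimensional square morphism of prime size s prolongable on a ∈ A, let q be a direction, and let C be the cyclic subgroup of (ℤ/sℤ)^d generated by q mod s. Suppose φ(b)(i) ≠ a for every letter b ∈ A and every i ∈ C, except that φ(a)(0) = a. Then the sequence ℓ ↦ φ^ω(a)(ℓq) satisfies: it equals a at ℓ = 0 and differs from a for all ℓ ≥ 1. In particular φ^ω(a) is not recurrent along direction q. -/
import Mathlib


theorem stmt_15 {d : ℕ} {A : Type*} (s : ℕ) (hs : s.Prime)
    (φ : A → (Fin d → Fin s) → A) (a : A)
    (hprol : φ a (fun _ => ⟨0, hs.pos⟩) = a)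
    (w : (Fin d → ℕ) → A)
    (hw0 : w (fun _ => 0) = a)
    (hfix : ∀ (i : Fin d → ℕ) (r : Fin d → Fin s),
      w (fun j => s * i j + (r j : ℕ)) = φ (w i) r)
    (q : Fin d → ℕ) (hq : Finset.univ.gcd q = 1)
    -- `φ(b)(i) ≠ a` for all `b ∈ A` and `i` in the cyclic subgroup generated by `q mod s`,
    -- except for `φ(a)(0) = a`.
    (hC : ∀ (b : A) (r : Fin d → Fin s),
      (∃ k : ZMod s, ∀ j, ((r j : ℕ) : ZMod s) = k * ((q j : ℕ) : ZMod s)) →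
      ¬ (b = a ∧ ∀ j, (r j : ℕ) = 0) → φ b r ≠ a) :
    w (fun j => 0 * q j) = a ∧
      ∀ ℓ : ℕ, 1 ≤ ℓ → w (fun j => ℓ * q j) ≠ a := by
  constructor
  · simpa using hw0
  · intro ℓ
    induction ℓ using Nat.strong_induction_on with
    | _ ℓ ih =>
      intro hℓ
      set r : Fin d → Fin s := fun j => ⟨(ℓ * q j) % s, Nat.mod_lt _ hs.pos⟩ with hr
      set i : Fin d → ℕ := fun j => ℓ * q j / s with hi
      have key : (fun j => ℓ * q j) = fun j => s * i j + (r j : ℕ) := by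
        funext j; simp [hi, hr, Nat.div_add_mod]
      rw [key, hfix]
      by_cases hcase : w i = a ∧ ∀ j, (r j : ℕ) = 0
      · exfalso
        have hsl : s ∣ ℓ := by
          by_contra hns
          have hdvd : ∀ j, s ∣ q j := fun j =>
            ((Nat.Prime.dvd_mul hs).mp
              (Nat.dvd_of_mod_eq_zero (hcase.2 j))).resolve_left hns
          have : s ∣ Finset.univ.gcd q := Finset.dvd_gcd fun j _ => hdvd j
          rw [hq] at this
          exact hs.one_lt.ne' (Nat.eq_one_of_dvd_one this)
        obtain ⟨ℓ', rfl⟩ := hsl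
        have hℓ' : 1 ≤ ℓ' := Nat.pos_of_ne_zero (by rintro rfl; simp at hℓ)
        have hilt : ℓ' < s * ℓ' := by
          have := hs.one_lt
          calc ℓ' = 1 * ℓ' := (one_mul _).symm
          _ < s * ℓ' := by exact (Nat.mul_lt_mul_right hℓ').mpr this
        have hieq : i = fun j => ℓ' * q j := by
          funext j
          simp only [hi]
          rw [mul_assoc, Nat.mul_div_cancel_left _ hs.pos]
        exact ih ℓ' hilt hℓ' (hieq ▸ hcase.1)
      · refine hC (w i) r ⟨(ℓ : ZMod s), fun j => ?_⟩ hcase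
        simp only [hr]
        push_cast [ZMod.natCast_mod]
        ring
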